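/- For each n ≥ 2, the maximum of |sign(V)| over all 2-dimensional subspaces V of ℝ^n equals 4n + 1. -/

import Mathlib

open Matrix

noncomputable section

def signVec {n : ℕ} (x : Fin n → ℝ) : Fin n → SignType := fun i => SignType.sign (x i)

def signSet {n : ℕ} (L : Submodule ℝ (Fin n → ℝ)) : Set (Fin n → SignType) :=
  signVec '' (L : Set (Fin n → ℝ))

def IsRationalVec {n : ℕ} (v : Fin n → ℝ) : Prop := ∀ i, ∃ q : ℚ, v i = (q : ℝ)

def IsRationalSubspace {n : ℕ} (K : Submodule ℝ (Fin n → ℝ)) : Prop :=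
  ∃ s : Set (Fin n → ℝ), (∀ v ∈ s, IsRationalVec v) ∧ Submodule.span ℝ s = K

def IsRationalMatrix {m n : ℕ} (B : Matrix (Fin m) (Fin n) ℝ) : Prop :=
  ∀ i j, ∃ q : ℚ, B i j = (q : ℝ)

def mr {m n : ℕ} (A : Matrix (Fin m) (Fin n) SignType) : ℕ :=
  sInf {r | ∃ B : Matrix (Fin m) (Fin n) ℝ, (∀ i j, SignType.sign (B i j) = A i j) ∧ B.rank = r}

def SignPerp {n : ℕ} (c x : Fin n → SignType) : Prop :=
  (∀ i, c i = 0 ∨ x i = 0) ∨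
  (∃ i j, c i = x i ∧ c i ≠ 0 ∧ c j = -(x j) ∧ c j ≠ 0)
lemma sign_affine (u v s : ℝ) (hu : u ≠ 0) :
    SignType.sign (s * u + v) = SignType.sign u * SignType.sign (s - (-v/u)) := by
  rw [← sign_mul]; congr 1; field_simp; ring

section count
variable {n : ℕ} (u v : Fin n → ℝ)

def roots : Finset ℝ := Finset.image (fun i => -v i / u i) (Finset.univ.filter fun i : Fin n => u i ≠ 0)

def G : ℝ → (Fin n → SignType) := fun s => signVec (fun i => s * u i + v i)

def qq : ℝ → ℕ × Bool := fun s => (((roots u v).filter (· < s)).card, decide (s ∈ roots u v))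

lemma G_eq_of_qq_eq_aux {s s' : ℝ} (hle : s ≤ s') (h : qq u v s = qq u v s') :
    G u v s = G u v s' := by
  have hcard : ((roots u v).filter (· < s)).card = ((roots u v).filter (· < s')).card :=
    congrArg Prod.fst h
  have hmem : s ∈ roots u v ↔ s' ∈ roots u v := by
    have := congrArg Prod.snd h
    simpa [qq] using this
  have hsub : (roots u v).filter (· < s) ⊆ (roots u v).filter (· < s') := by
    intro r hr
    simp only [Finset.mem_filter] at hr ⊢
    exact ⟨hr.1, lt_of_lt_of_le hr.2 hle⟩
  have hfeq : (roots u v).filter (· < s) = (roots u v).filter (· < s') :=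
    Finset.eq_of_subset_of_card_le hsub (le_of_eq hcard.symm)
  have hiff : ∀ r ∈ roots u v, (r < s ↔ r < s') := by
    intro r hr
    constructor
    · intro h1; exact lt_of_lt_of_le h1 hle
    · intro h1
      by_contra h2
      have : r ∈ (roots u v).filter (· < s') := Finset.mem_filter.2 ⟨hr, h1⟩
      rw [← hfeq] at this
      exact h2 (Finset.mem_filter.1 this).2
  funext i
  by_cases hu : u i = 0
  · simp [G, signVec, hu]
  · have hr : -v i / u i ∈ roots u v := by
      apply Finset.mem_image_of_mem
      simp [hu]
    set r := -v i / u i with hrdef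
    simp only [G, signVec, sign_affine (u i) (v i) _ hu, ← hrdef]
    congr 1
    rcases lt_trichotomy r s with h1 | h1 | h1
    · rw [sign_pos (sub_pos.2 h1), sign_pos (sub_pos.2 (lt_of_lt_of_le h1 hle))]
    · -- r = s, so s ∈ roots; show s = s'
      subst h1
      have hsR : r ∈ roots u v := hr
      rcases eq_or_lt_of_le hle with h2 | h2
      · rw [h2]
      · exfalso
        have : r ∈ (roots u v).filter (· < s') := Finset.mem_filter.2 ⟨hsR, h2⟩
        rw [← hfeq] at this
        exact absurd (Finset.mem_filter.1 this).2 (lt_irrefl r)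
    · -- s < r
      have h2 : ¬ (r < s') := fun hc => absurd ((hiff r hr).2 hc) (not_lt.2 (le_of_lt h1))
      rcases eq_or_lt_of_le (not_lt.1 h2) with h3 | h3
      · -- s' = r : then s' ∈ roots, so s ∈ roots, and s < s' gives contradiction
        exfalso
        have hs' : s' ∈ roots u v := h3 ▸ hr
        have hs : s ∈ roots u v := hmem.2 hs'
        have hss' : s < s' := h3 ▸ h1
        have : s ∈ (roots u v).filter (· < s') := Finset.mem_filter.2 ⟨hs, hss'⟩
        rw [← hfeq] at this
        exact absurd (Finset.mem_filter.1 this).2 (lt_irrefl s)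
      · rw [sign_neg (sub_neg.2 h1), sign_neg (sub_neg.2 h3)]

lemma G_eq_of_qq_eq {s s' : ℝ} (h : qq u v s = qq u v s') : G u v s = G u v s' := by
  rcases le_total s s' with hle | hle
  · exact G_eq_of_qq_eq_aux u v hle h
  · exact (G_eq_of_qq_eq_aux u v hle h.symm).symm

lemma qq_mem (s : ℝ) :
    qq u v s ∈ (Finset.range ((roots u v).card + 1) ×ˢ ({false} : Finset Bool)) ∪
      (Finset.range ((roots u v).card) ×ˢ ({true} : Finset Bool)) := by
  by_cases hs : s ∈ roots u v
  · apply Finset.mem_union_right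
    simp only [Finset.mem_product, Finset.mem_range, Finset.mem_singleton]
    constructor
    · have hsub : (roots u v).filter (· < s) ⊆ (roots u v).erase s := by
        intro r hr
        simp only [Finset.mem_filter] at hr
        exact Finset.mem_erase.2 ⟨ne_of_lt hr.2, hr.1⟩
      calc ((roots u v).filter (· < s)).card ≤ ((roots u v).erase s).card :=
            Finset.card_le_card hsub
        _ < (roots u v).card := Finset.card_erase_lt_of_mem hs
    · simp [qq, hs]
  · apply Finset.mem_union_left
    simp only [Finset.mem_product, Finset.mem_range, Finset.mem_singleton]
    constructor
    · exact Nat.lt_succ_of_le (Finset.card_le_card (Finset.filter_subset (· < s) (roots u v)))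
    · simp [qq, hs]

lemma ncard_range_G_le :
    (Set.range (G u v)).ncard ≤ 2 * (roots u v).card + 1 := by
  classical
  set S : Finset (ℕ × Bool) := (Finset.range ((roots u v).card + 1) ×ˢ ({false} : Finset Bool)) ∪
      (Finset.range ((roots u v).card) ×ˢ ({true} : Finset Bool)) with hS
  set h : ℕ × Bool → (Fin n → SignType) := fun p =>
    if hp : ∃ s, qq u v s = p then G u v (Classical.choose hp) else 0 with hh
  have hfac : G u v = h ∘ qq u v := by
    funext s
    have hex : ∃ t, qq u v t = qq u v s := ⟨s, rfl⟩
    simp only [hh, Function.comp_apply, dif_pos hex]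
    exact (G_eq_of_qq_eq u v (Classical.choose_spec hex)).symm
  have hrange : Set.range (qq u v) ⊆ ↑S := fun p ⟨s, hs⟩ => hs ▸ qq_mem u v s
  have hfin : (Set.range (qq u v)).Finite := Set.Finite.subset S.finite_toSet hrange
  calc (Set.range (G u v)).ncard = (h '' Set.range (qq u v)).ncard := by
        rw [hfac, Set.range_comp]
    _ ≤ (Set.range (qq u v)).ncard := Set.ncard_image_le hfin
    _ ≤ (↑S : Set (ℕ × Bool)).ncard := Set.ncard_le_ncard hrange S.finite_toSet
    _ = S.card := Set.ncard_coe_finset S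
    _ ≤ ((roots u v).card + 1) + (roots u v).card := by
        apply le_trans (Finset.card_union_le _ _)
        simp [Finset.card_product]
    _ ≤ 2 * (roots u v).card + 1 := by omega
end count

lemma signVec_smul {n : ℕ} {r : ℝ} (hr : 0 < r) (x : Fin n → ℝ) :
    signVec (r • x) = signVec x := by
  funext i
  simp only [signVec, Pi.smul_apply, smul_eq_mul, sign_mul, sign_pos hr, one_mul]

lemma signVec_neg {n : ℕ} (x : Fin n → ℝ) : signVec (-x) = -signVec x := by
  funext i
  simp only [signVec, Pi.neg_apply, Left.sign_neg]

lemma signVec_zero {n : ℕ} : signVec (0 : Fin n → ℝ) = 0 := by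
  funext i; simp [signVec]

lemma signSet_subset {n : ℕ} (V : Submodule ℝ (Fin n → ℝ)) (hV : Module.finrank ℝ V = 2) :
    ∃ u v : Fin n → ℝ, u ≠ 0 ∧
      signSet V ⊆ {0} ∪ Set.range (G u v) ∪ Set.range (fun s => -(G u v s)) ∪
        {signVec u, -signVec u} := by
  have : FiniteDimensional ℝ V := by
    have : Module.finrank ℝ V ≠ 0 := by omega
    exact Module.finite_of_finrank_pos (Nat.pos_of_ne_zero this)
  let b := Module.finBasisOfFinrankEq ℝ V hV
  refine ⟨↑(b 0), ↑(b 1), ?_, ?_⟩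
  · have := b.ne_zero 0
    simpa [Submodule.coe_eq_zero] using fun h => this (Subtype.ext h)
  rintro σ ⟨x, hx, rfl⟩
  set u : Fin n → ℝ := ↑(b 0)
  set v : Fin n → ℝ := ↑(b 1)
  set a : ℝ := b.repr ⟨x, hx⟩ 0
  set c : ℝ := b.repr ⟨x, hx⟩ 1
  have hxuv : x = a • u + c • v := by
    have h1 := b.sum_repr ⟨x, hx⟩
    have h2 := congrArg (Subtype.val) h1
    rw [Fin.sum_univ_two] at h1
    have := congrArg (Subtype.val) h1
    simpa [u, v, a, c] using this.symm
  rcases lt_trichotomy c 0 with hc | hc | hc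
  · -- x = (-c) • ((a/(-c)) • u + (-1) • v), signVec x = -(G (-(a/(-c))))
    left; right
    refine ⟨-(a / (-c)), ?_⟩
    have key : x = (-c) • (-((-(a / (-c))) • u + v)) := by
      rw [hxuv]
      have hc' : c ≠ 0 := ne_of_lt hc
      funext i
      simp only [Pi.smul_apply, Pi.add_apply, Pi.neg_apply, smul_eq_mul]
      field_simp
    rw [key, signVec_smul (by linarith), signVec_neg]
    congr 1
  · rcases lt_trichotomy a 0 with ha | ha | ha
    · -- x = (-a) • (-u)
      right; right
      have key : x = (-a) • (-u) := by
        rw [hxuv, hc]; funext i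
        simp only [Pi.smul_apply, Pi.add_apply, Pi.neg_apply, smul_eq_mul]; ring
      rw [key, signVec_smul (by linarith), signVec_neg]
      rfl
    · left; left; left
      rw [hxuv, hc, ha]
      simp [signVec_zero]
    · right; left
      have key : x = a • u := by
        rw [hxuv, hc]; funext i
        simp only [Pi.smul_apply, Pi.add_apply, smul_eq_mul]; ring
      rw [key, signVec_smul ha]
  · left; left; right
    refine ⟨a / c, ?_⟩
    have key : x = c • (fun i => (a / c) * u i + v i) := by
      rw [hxuv]
      have hc' : c ≠ 0 := ne_of_gt hc
      funext i
      simp only [Pi.smul_apply, Pi.add_apply, smul_eq_mul]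
      field_simp
    rw [key, signVec_smul hc]
    rfl

lemma exists_le_real (S : Finset ℝ) : ∃ M : ℝ, ∀ r ∈ S, r ≤ M := S.exists_le

lemma G_large {n : ℕ} (u v : Fin n → ℝ) (hA2 : ∀ i, u i = 0 → v i = 0) :
    signVec u ∈ Set.range (G u v) ∧ -signVec u ∈ Set.range (G u v) := by
  obtain ⟨M, hM⟩ := (roots u v).exists_le
  obtain ⟨m', hm'⟩ := ((roots u v).image (fun x => -x)).exists_le
  constructor
  · refine ⟨M + 1, ?_⟩
    funext i
    by_cases hu : u i = 0
    · simp [G, signVec, hu, hA2 i hu]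
    · have hr : -v i / u i ∈ roots u v := Finset.mem_image_of_mem _ (by simp [hu])
      have : (0:ℝ) < (M+1) - (-v i/u i) := by have := hM _ hr; linarith
      simp only [G, signVec, sign_affine (u i) (v i) _ hu, sign_pos this, mul_one]
  · refine ⟨-(m' + 1), ?_⟩
    funext i
    by_cases hu : u i = 0
    · simp [G, signVec, hu, hA2 i hu, Pi.neg_apply]
    · have hr : -v i / u i ∈ roots u v := Finset.mem_image_of_mem _ (by simp [hu])
      have h2 : -(-v i/u i) ≤ m' := hm' _ (Finset.mem_image_of_mem _ hr)
      have : (-(m'+1)) - (-v i/u i) < 0 := by linarith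
      simp only [G, signVec, sign_affine (u i) (v i) _ hu, sign_neg this, Pi.neg_apply,
        mul_neg_one]


lemma ncard_signSet_le {n : ℕ} (hn : 2 ≤ n) (V : Submodule ℝ (Fin n → ℝ))
    (hV : Module.finrank ℝ V = 2) : (signSet V).ncard ≤ 4 * n + 1 := by
  classical
  obtain ⟨u, v, hu, hsub⟩ := signSet_subset V hV
  set A := Set.range (G u v) with hA
  set B := Set.range (fun s => -(G u v s)) with hB
  set w := signVec u with hw
  set k := (roots u v).card with hk
  have hAcard : A.ncard ≤ 2 * k + 1 := ncard_range_G_le u v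
  have hBA : B = Neg.neg '' A := by
    rw [hA, hB, ← Set.range_comp]
    rfl
  have hBcard : B.ncard ≤ 2 * k + 1 := by
    rw [hBA, Set.ncard_image_of_injective _ neg_injective]
    exact hAcard
  have h0 : ({0} : Set (Fin n → SignType)).ncard = 1 := Set.ncard_singleton _
  have hwcard : ({w, -w} : Set (Fin n → SignType)).ncard ≤ 2 := by
    have h1 := Set.ncard_insert_le w ({-w} : Set (Fin n → SignType))
    have h2 : ({-w} : Set (Fin n → SignType)).ncard = 1 := Set.ncard_singleton _
    omega
  by_cases hcase : ∃ i, u i = 0 ∧ v i ≠ 0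
  · -- easy case: k + 1 ≤ n
    obtain ⟨i0, hi0u, hi0v⟩ := hcase
    have hkn : k + 1 ≤ n := by
      have h1 : (Finset.univ.filter fun i : Fin n => u i ≠ 0) ⊆ Finset.univ.erase i0 := by
        intro i hi
        simp only [Finset.mem_filter] at hi
        exact Finset.mem_erase.2 ⟨fun h => hi.2 (h ▸ hi0u), Finset.mem_univ i⟩
      have h2 : k ≤ (Finset.univ.erase i0).card :=
        le_trans Finset.card_image_le (Finset.card_le_card h1)
      rw [Finset.card_erase_of_mem (Finset.mem_univ i0), Finset.card_univ, Fintype.card_fin] at h2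
      omega
    have t1 : (signSet V).ncard ≤ ({0} ∪ A ∪ B ∪ {w, -w} : Set _).ncard :=
      Set.ncard_le_ncard hsub (Set.toFinite _)
    have t2 : ({0} ∪ A ∪ B ∪ {w, -w} : Set _).ncard ≤
        ({0} ∪ A ∪ B : Set _).ncard + ({w, -w} : Set _).ncard := Set.ncard_union_le _ _
    have t3 : ({0} ∪ A ∪ B : Set _).ncard ≤ ({0} ∪ A : Set _).ncard + B.ncard :=
      Set.ncard_union_le _ _
    have t4 : ({0} ∪ A : Set _).ncard ≤ ({0} : Set (Fin n → SignType)).ncard + A.ncard :=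
      Set.ncard_union_le _ _
    omega
  · push_neg at hcase
    obtain ⟨hwA, hwA'⟩ := G_large u v hcase
    rw [← hw] at hwA hwA'
    have hwB : w ∈ B := by
      rw [hBA]
      exact ⟨-w, hwA', neg_neg w⟩
    have hwB' : -w ∈ B := by
      rw [hBA]
      exact ⟨w, hwA, rfl⟩
    have hne : w ≠ -w := by
      obtain ⟨i, hi⟩ := Function.ne_iff.1 hu
      rw [Pi.zero_apply] at hi
      intro h
      have h2 : w i = -(w i) := by
        have := congrFun h i
        rwa [Pi.neg_apply] at this
      have h3 : w i = 0 := by revert h2; generalize w i = a; revert a; decide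
      exact (sign_ne_zero.2 hi) h3
    have hkn : k ≤ n := by
      have h2 : k ≤ (Finset.univ.filter fun i : Fin n => u i ≠ 0).card :=
        Finset.card_image_le
      have h3 := Finset.card_filter_le Finset.univ (fun i : Fin n => u i ≠ 0)
      simp only [Finset.card_univ, Fintype.card_fin] at h3
      omega
    have hsub2 : signSet V ⊆ {0} ∪ (A ∪ B) := by
      intro σ hσ
      rcases hsub hσ with (((h | h) | h) | h)
      · exact Set.mem_union_left _ h
      · exact Set.mem_union_right _ (Set.mem_union_left _ h)
      · exact Set.mem_union_right _ (Set.mem_union_right _ h)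
      · rcases h with h | h
        · exact h ▸ Set.mem_union_right _ (Set.mem_union_left _ hwA)
        · rw [Set.mem_singleton_iff] at h
          exact h ▸ Set.mem_union_right _ (Set.mem_union_left _ hwA')
    have hinter : 2 ≤ (A ∩ B).ncard := by
      have hsub3 : ({w, -w} : Set _) ⊆ A ∩ B := by
        intro σ hσ
        rcases hσ with h | h
        · exact h ▸ ⟨hwA, hwB⟩
        · rw [Set.mem_singleton_iff] at h
          exact h ▸ ⟨hwA', hwB'⟩
      calc 2 = ({w, -w} : Set _).ncard := (Set.ncard_pair hne).symm
        _ ≤ (A ∩ B).ncard := Set.ncard_le_ncard hsub3 (Set.toFinite _)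
    have hunion : (A ∪ B).ncard + (A ∩ B).ncard = A.ncard + B.ncard :=
      Set.ncard_union_add_ncard_inter A B (Set.toFinite A) (Set.toFinite B)
    have t1 : (signSet V).ncard ≤ ({0} ∪ (A ∪ B) : Set _).ncard :=
      Set.ncard_le_ncard hsub2 (Set.toFinite _)
    have t2 : ({0} ∪ (A ∪ B) : Set _).ncard ≤ ({0} : Set (Fin n → SignType)).ncard + (A ∪ B).ncard :=
      Set.ncard_union_le _ _
    omega

lemma sign_intCast' (z : ℤ) : SignType.sign ((z : ℝ)) = SignType.sign z := by
  rcases lt_trichotomy z 0 with h | h | h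
  · rw [sign_neg h, sign_neg (by exact_mod_cast Int.cast_lt_zero.2 h)]
  · rw [h]; simp
  · rw [sign_pos h, sign_pos (by exact_mod_cast Int.cast_pos.2 h)]

lemma sign_eq_cases {a b : ℤ} (h : SignType.sign a = SignType.sign b) :
    (0 < a ∧ 0 < b) ∨ (a = 0 ∧ b = 0) ∨ (a < 0 ∧ b < 0) := by
  rcases lt_trichotomy a 0 with h1 | h1 | h1 <;> rcases lt_trichotomy b 0 with h2 | h2 | h2
  · exact Or.inr (Or.inr ⟨h1, h2⟩)
  · rw [sign_neg h1, h2, sign_zero] at h; exact absurd h (by decide)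
  · rw [sign_neg h1, sign_pos h2] at h; exact absurd h (by decide)
  · rw [h1, sign_zero, sign_neg h2] at h; exact absurd h (by decide)
  · exact Or.inr (Or.inl ⟨h1, h2⟩)
  · rw [h1, sign_zero, sign_pos h2] at h; exact absurd h (by decide)
  · rw [sign_pos h1, sign_neg h2] at h; exact absurd h (by decide)
  · rw [sign_pos h1, h2, sign_zero] at h; exact absurd h (by decide)
  · exact Or.inl ⟨h1, h2⟩

def mm (n : ℕ) (t : ℤ) : Fin n → SignType := fun i => SignType.sign (2 * ((i : ℕ) : ℤ) - t)

-- injectivity of mm on Icc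
lemma mm_ne {n : ℕ} (hn : 2 ≤ n) {t t' : ℤ} (ht : -1 ≤ t) (htt : t < t')
    (ht' : t' ≤ 2 * n - 1) : mm n t ≠ mm n t' := by
  intro heq
  by_cases he : t % 2 = 0
  · -- use i with 2i = t
    have hb : 0 ≤ t ∧ t ≤ 2*n - 2 := by omega
    set a : ℕ := (t / 2).toNat with ha
    have haz : ((a : ℕ) : ℤ) = t / 2 := Int.toNat_of_nonneg (by omega)
    have han : a < n := by omega
    have h1 : mm n t ⟨a, han⟩ = 0 := by
      apply sign_eq_zero_iff.2
      simp only [mm]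
      omega
    have h2 : mm n t' ⟨a, han⟩ = -1 := by
      apply sign_neg
      simp only [mm]
      omega
    rw [heq, h2] at h1
    exact absurd h1 (by decide)
  · by_cases he' : t' % 2 = 0
    · have hb : 0 ≤ t' ∧ t' ≤ 2*n - 2 := by omega
      set a : ℕ := (t' / 2).toNat with ha
      have haz : ((a : ℕ) : ℤ) = t' / 2 := Int.toNat_of_nonneg (by omega)
      have han : a < n := by omega
      have h1 : mm n t' ⟨a, han⟩ = 0 := by
        apply sign_eq_zero_iff.2; simp only [mm]; omega
      have h2 : mm n t ⟨a, han⟩ = 1 := by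
        apply sign_pos; simp only [mm]; omega
      rw [heq, h1] at h2
      exact absurd h2 (by decide)
    · -- both odd
      have hb : 0 ≤ t + 1 ∧ t + 1 ≤ 2*n - 2 := by omega
      set a : ℕ := ((t+1) / 2).toNat with ha
      have haz : ((a : ℕ) : ℤ) = (t+1) / 2 := Int.toNat_of_nonneg (by omega)
      have han : a < n := by omega
      have h1 : mm n t ⟨a, han⟩ = 1 := by
        apply sign_pos; simp only [mm]; omega
      have h2 : mm n t' ⟨a, han⟩ = -1 := by
        apply sign_neg; simp only [mm]; omega
      rw [heq, h2] at h1
      exact absurd h1 (by decide)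

lemma mm_ne_neg {n : ℕ} (hn : 2 ≤ n) {t t' : ℤ} (ht1 : -1 ≤ t) (ht2 : t ≤ 2 * n - 1)
    (ht3 : 0 ≤ t') (ht4 : t' ≤ 2 * n - 2) : mm n t ≠ -(mm n t') := by
  intro heq
  have h0n : 0 < n := by omega
  have h1n : 1 < n := hn
  have key : ∀ a : ℕ, a < n →
      SignType.sign (2 * (a : ℤ) - t) = SignType.sign (t' - 2 * (a : ℤ)) := by
    intro a han
    have := congrFun heq ⟨a, han⟩
    simp only [mm, Pi.neg_apply] at this
    rw [this, ← Left.sign_neg]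
    congr 1
    ring
  have h0 := sign_eq_cases (key 0 h0n)
  have hN := sign_eq_cases (key (n-1) (by omega))
  have hc : ((n - 1 : ℕ) : ℤ) = (n : ℤ) - 1 := by omega
  rw [hc] at hN
  push_cast at h0 hN
  rcases h0 with ⟨ha, hb⟩ | ⟨ha, hb⟩ | ⟨ha, hb⟩
  · omega
  · -- t = 0, t' = 0 : evaluate at 1
    have := sign_eq_cases (key 1 h1n)
    omega
  · omega

lemma mm_ne_zero {n : ℕ} (hn : 2 ≤ n) {t : ℤ} (ht1 : -1 ≤ t) (ht2 : t ≤ 2 * n - 1) :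
    mm n t ≠ 0 := by
  intro heq
  by_cases h : t = 0
  · have := congrFun heq ⟨1, by omega⟩
    simp only [mm, Pi.zero_apply, h] at this
    rw [sign_eq_zero_iff] at this
    omega
  · have := congrFun heq ⟨0, by omega⟩
    simp only [mm, Pi.zero_apply] at this
    rw [sign_eq_zero_iff] at this
    omega

section construction
variable (n : ℕ)

def uu : Fin n → ℝ := fun _ => 1
def vv : Fin n → ℝ := fun i => ((i : ℕ) : ℝ)
def VV : Submodule ℝ (Fin n → ℝ) := Submodule.span ℝ (Set.range ![uu n, vv n])

lemma finrank_VV (hn : 2 ≤ n) : Module.finrank ℝ (VV n) = 2 := by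
  have hli : LinearIndependent ℝ ![uu n, vv n] := by
    rw [linearIndependent_fin2]
    constructor
    · intro h
      have := congrFun h ⟨1, by omega⟩
      simp [vv] at this
    · intro a h
      have := congrFun h ⟨0, by omega⟩
      simp [uu, vv] at this
  rw [VV, finrank_span_eq_card hli]
  simp

def xx (t : ℤ) : Fin n → ℝ := fun i => 2 * ((i : ℕ) : ℝ) - t

lemma xx_mem (t : ℤ) : xx n t ∈ VV n := by
  have hu : uu n ∈ VV n := Submodule.subset_span ⟨0, rfl⟩
  have hv : vv n ∈ VV n := Submodule.subset_span ⟨1, rfl⟩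
  have : xx n t = (2 : ℝ) • vv n + (-(t:ℝ)) • uu n := by
    funext i
    simp only [xx, uu, vv, Pi.add_apply, Pi.smul_apply, smul_eq_mul]
    ring
  rw [this]
  exact Submodule.add_mem _ (Submodule.smul_mem _ _ hv) (Submodule.smul_mem _ _ hu)

lemma signVec_xx (t : ℤ) : signVec (xx n t) = mm n t := by
  funext i
  simp only [signVec, xx, mm]
  rw [show 2 * ((i:ℕ) : ℝ) - (t:ℝ) = (((2 * (i:ℕ) - t) : ℤ) : ℝ) by push_cast; ring]
  exact sign_intCast' _

lemma mm_mem (t : ℤ) : mm n t ∈ signSet (VV n) := ⟨xx n t, xx_mem n t, signVec_xx n t⟩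

lemma neg_mm_mem (t : ℤ) : -(mm n t) ∈ signSet (VV n) := by
  refine ⟨-(xx n t), Submodule.neg_mem _ (xx_mem n t), ?_⟩
  funext i
  simp only [signVec, Pi.neg_apply, Left.sign_neg, Pi.neg_apply]
  have := congrFun (signVec_xx n t) i
  simp only [signVec] at this
  rw [this]

lemma zero_mem_signSet : (0 : Fin n → SignType) ∈ signSet (VV n) := by
  refine ⟨0, Submodule.zero_mem _, ?_⟩
  funext i; simp [signVec]

def FF : Finset (Fin n → SignType) :=
  ((Finset.Icc (-1 : ℤ) (2*n - 1)).image (mm n)) ∪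
  ((Finset.Icc (0 : ℤ) (2*n - 2)).image (fun t => -(mm n t))) ∪ {0}

lemma FF_card (hn : 2 ≤ n) : (FF n).card = 4 * n + 1 := by
  have hinj1 : Set.InjOn (mm n) ↑(Finset.Icc (-1 : ℤ) (2*n - 1)) := by
    intro t ht t' ht' h
    simp only [Finset.coe_Icc, Set.mem_Icc] at ht ht'
    by_contra hne
    rcases lt_or_gt_of_ne hne with hlt | hlt
    · exact mm_ne hn ht.1 hlt ht'.2 h
    · exact mm_ne hn ht'.1 hlt ht.2 h.symm
  have hinj2 : Set.InjOn (fun t => -(mm n t)) ↑(Finset.Icc (0 : ℤ) (2*n - 2)) := by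
    intro t ht t' ht' h
    simp only [Finset.coe_Icc, Set.mem_Icc] at ht ht'
    have h2 : mm n t = mm n t' := by
      have := congrArg Neg.neg h
      simpa using this
    by_contra hne
    rcases lt_or_gt_of_ne hne with hlt | hlt
    · exact mm_ne hn (by omega) hlt (by omega) h2
    · exact mm_ne hn (by omega) hlt (by omega) h2.symm
  have hc1 : ((Finset.Icc (-1 : ℤ) (2*n - 1)).image (mm n)).card = 2*n + 1 := by
    rw [Finset.card_image_of_injOn hinj1, Int.card_Icc]
    omega
  have hc2 : ((Finset.Icc (0 : ℤ) (2*n - 2)).image (fun t => -(mm n t))).card = 2*n - 1 := by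
    rw [Finset.card_image_of_injOn hinj2, Int.card_Icc]
    omega
  have hdisj : Disjoint ((Finset.Icc (-1 : ℤ) (2*n - 1)).image (mm n))
      ((Finset.Icc (0 : ℤ) (2*n - 2)).image (fun t => -(mm n t))) := by
    rw [Finset.disjoint_left]
    rintro σ h1 h2
    obtain ⟨t, ht, rfl⟩ := Finset.mem_image.1 h1
    obtain ⟨t', ht', heq⟩ := Finset.mem_image.1 h2
    simp only [Finset.mem_Icc] at ht ht'
    exact mm_ne_neg hn ht.1 ht.2 ht'.1 ht'.2 heq.symm
  have hz : (0 : Fin n → SignType) ∉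
      ((Finset.Icc (-1 : ℤ) (2*n - 1)).image (mm n)) ∪
      ((Finset.Icc (0 : ℤ) (2*n - 2)).image (fun t => -(mm n t))) := by
    rw [Finset.mem_union]
    rintro (h | h)
    · obtain ⟨t, ht, heq⟩ := Finset.mem_image.1 h
      simp only [Finset.mem_Icc] at ht
      exact mm_ne_zero hn ht.1 ht.2 heq
    · obtain ⟨t, ht, heq⟩ := Finset.mem_image.1 h
      simp only [Finset.mem_Icc] at ht
      apply mm_ne_zero hn (t := t) (by omega) (by omega)
      funext i
      have h2 := congrFun heq i
      simp only [Pi.neg_apply, Pi.zero_apply] at h2 ⊢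
      revert h2; generalize mm n t i = a; revert a; decide
  rw [FF, Finset.card_union_of_disjoint (Finset.disjoint_singleton_right.2 hz),
    Finset.card_union_of_disjoint hdisj, hc1, hc2, Finset.card_singleton]
  omega

lemma FF_subset : ↑(FF n) ⊆ signSet (VV n) := by
  intro σ hσ
  simp only [FF, Finset.coe_union, Set.mem_union, Finset.coe_singleton, Set.mem_singleton_iff,
    Finset.coe_image, Set.mem_image] at hσ
  rcases hσ with (⟨t, _, rfl⟩ | ⟨t, _, rfl⟩) | rfl
  · exact mm_mem n t
  · exact neg_mm_mem n t
  · exact zero_mem_signSet n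

lemma signSet_VV_ncard (hn : 2 ≤ n) : (signSet (VV n)).ncard = 4 * n + 1 := by
  have hge : 4 * n + 1 ≤ (signSet (VV n)).ncard := by
    calc 4 * n + 1 = (FF n).card := (FF_card n hn).symm
      _ = (↑(FF n) : Set _).ncard := (Set.ncard_coe_finset _).symm
      _ ≤ (signSet (VV n)).ncard := Set.ncard_le_ncard (FF_subset n) (Set.toFinite _)
  have hle : (signSet (VV n)).ncard ≤ 4 * n + 1 := by
    exact ncard_signSet_le hn (VV n) (finrank_VV n hn)
  omega

end construction


theorem stmt_16 {n : ℕ} (hn : 2 ≤ n) :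
    IsGreatest {c : ℕ | ∃ V : Submodule ℝ (Fin n → ℝ),
        Module.finrank ℝ V = 2 ∧ (signSet V).ncard = c} (4 * n + 1) := by
  constructor
  · exact ⟨VV n, finrank_VV n hn, signSet_VV_ncard n hn⟩
  · rintro c ⟨V, hV, rfl⟩
    exact ncard_signSet_le hn V hV
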